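/- Let H ∈ ℝ^{n×n} be symmetric positive semidefinite, G ∈ ℝ^{n×m}, ‖H‖ denote the spectral norm, and (ρ_t)_{t≥0} a nondecreasing sequence of positive reals. Suppose sequences (D_t), (V_t) in ℝ^{n×m} satisfy, for all t: ‖V_{t+1}‖_F ≤ ‖G - H D_t‖_F + ‖H V_t‖_F / ρ_t and ‖D_{t+1}‖_F ≤ (1 + 2‖H‖/ρ_t) ‖D_t‖_F + 2‖G‖_F/ρ_t + 2‖H‖ ‖V_t‖_F / ρ_t². Then for all t: ‖D_t‖_F + ‖V_t‖_F/ρ_t ≤ (∏_{s=0}^{t-1} (1 + 3‖H‖/ρ_s)) · (‖D_0‖_F + ‖V_0‖_F/ρ_0 + Σ_{s=0}^{t-1} 3‖G‖_F/ρ_s). -/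

import Mathlib

open scoped Classical

/-- Frobenius norm of a real matrix. -/
noncomputable def frob {n m : ℕ} (A : Matrix (Fin n) (Fin m) ℝ) : ℝ :=
  Real.sqrt (∑ i, ∑ j, (A i j) ^ 2)

/-- Spectral norm (operator 2-norm, largest singular value) of a real matrix. -/
noncomputable def spec {n m : ℕ} (A : Matrix (Fin n) (Fin m) ℝ) : ℝ :=
  ‖LinearMap.toContinuousLinearMap (Matrix.toEuclideanLin A)‖

/-- Number of nonzero entries of a matrix (the ℓ₀-"norm"). -/
noncomputable def l0 {n m : ℕ} (A : Matrix (Fin n) (Fin m) ℝ) : ℕ :=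
  (Finset.univ.filter fun p : Fin n × Fin m => A p.1 p.2 ≠ 0).card

attribute [local instance] Matrix.frobeniusSeminormedAddCommGroup

lemma frob_eq_norm {n m : ℕ} (A : Matrix (Fin n) (Fin m) ℝ) : frob A = ‖A‖ := by
  rw [Matrix.frobenius_norm_def, frob, Real.sqrt_eq_rpow]
  congr 1
  · simp [Real.norm_eq_abs, sq_abs]

lemma frob_nonneg {n m : ℕ} (A : Matrix (Fin n) (Fin m) ℝ) : 0 ≤ frob A :=
  Real.sqrt_nonneg _

lemma frob_sub_le {n m : ℕ} (A B : Matrix (Fin n) (Fin m) ℝ) :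
    frob (A - B) ≤ frob A + frob B := by
  simp only [frob_eq_norm]; exact norm_sub_le A B

lemma spec_nonneg {n m : ℕ} (A : Matrix (Fin n) (Fin m) ℝ) : 0 ≤ spec A :=
  norm_nonneg _

lemma frob_mul_le {n m : ℕ} (H : Matrix (Fin n) (Fin n) ℝ)
    (A : Matrix (Fin n) (Fin m) ℝ) : frob (H * A) ≤ spec H * frob A := by
  have h0 := spec_nonneg H
  rw [frob, frob, show spec H * Real.sqrt (∑ i, ∑ j, (A i j) ^ 2)
      = Real.sqrt ((spec H) ^ 2 * ∑ i, ∑ j, (A i j) ^ 2) by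
    rw [Real.sqrt_mul (by positivity), Real.sqrt_sq h0]]
  apply Real.sqrt_le_sqrt
  rw [Finset.sum_comm, Finset.sum_comm (s := Finset.univ) (f := fun i j => (A i j) ^ 2),
    Finset.mul_sum]
  apply Finset.sum_le_sum
  intro j _
  -- column j
  set u : EuclideanSpace ℝ (Fin n) := (WithLp.equiv 2 _).symm (fun k => A k j) with hu
  have hHu : Matrix.toEuclideanLin H u = (WithLp.equiv 2 _).symm ((H * A) · j) := by
    rw [hu, WithLp.equiv_symm_apply, Matrix.toEuclideanLin_apply_piLp_toLp]
    congr 1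
  have hbound : ‖Matrix.toEuclideanLin H u‖ ≤ spec H * ‖u‖ := by
    exact (LinearMap.toContinuousLinearMap (Matrix.toEuclideanLin H)).le_opNorm u
  have hnorm : ∀ (v : Fin n → ℝ),
      ‖(WithLp.equiv 2 (Fin n → ℝ)).symm v‖ ^ 2 = ∑ i, (v i) ^ 2 := by
    intro v
    rw [EuclideanSpace.norm_eq, Real.sq_sqrt (by positivity)]
    simp [Real.norm_eq_abs, sq_abs]
  calc ∑ i, ((H * A) i j) ^ 2 = ‖Matrix.toEuclideanLin H u‖ ^ 2 := by
        rw [hHu, hnorm]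
    _ ≤ (spec H * ‖u‖) ^ 2 := by
        apply sq_le_sq' _ hbound
        nlinarith [norm_nonneg (Matrix.toEuclideanLin H u)]
    _ = spec H ^ 2 * ∑ i, (A i j) ^ 2 := by
        rw [mul_pow, hu, hnorm]

/-- Lemma 2 of the ALPS paper. -/
theorem alps_lemma2 {n m : ℕ} (H : Matrix (Fin n) (Fin n) ℝ) (hH : H.PosSemidef)
    (G : Matrix (Fin n) (Fin m) ℝ) (ρ : ℕ → ℝ) (hρ : ∀ t, 0 < ρ t)
    (hmono : Monotone ρ)
    (D V : ℕ → Matrix (Fin n) (Fin m) ℝ)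
    (hV : ∀ t, frob (V (t + 1)) ≤ frob (G - H * D t) + frob (H * V t) / ρ t)
    (hD : ∀ t, frob (D (t + 1))
        ≤ (1 + 2 * spec H / ρ t) * frob (D t) + 2 * frob G / ρ t
          + 2 * spec H * frob (V t) / (ρ t) ^ 2) :
    ∀ t, frob (D t) + frob (V t) / ρ t
      ≤ (∏ s ∈ Finset.range t, (1 + 3 * spec H / ρ s)) *
          (frob (D 0) + frob (V 0) / ρ 0 + ∑ s ∈ Finset.range t, 3 * frob G / ρ s) := by
  set h := spec H with hh
  set g := frob G with hg
  have h0 : 0 ≤ h := spec_nonneg H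
  have g0 : 0 ≤ g := frob_nonneg G
  -- one-step recursion
  have key : ∀ t, frob (D (t+1)) + frob (V (t+1)) / ρ (t+1)
      ≤ (1 + 3*h/ρ t) * (frob (D t) + frob (V t)/ρ t) + 3*g/ρ t := by
    intro t
    have hr := hρ t
    have hv' : frob (V (t+1)) ≤ g + h * frob (D t) + h * frob (V t) / ρ t := by
      have h1 : frob (G - H * D t) ≤ g + h * frob (D t) :=
        (frob_sub_le G (H * D t)).trans (by
          have := frob_mul_le H (D t); linarith)
      have h2 : frob (H * V t) / ρ t ≤ h * frob (V t) / ρ t := by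
        gcongr
        exact frob_mul_le H (V t)
      have := hV t
      linarith
    have hvmono : frob (V (t+1)) / ρ (t+1) ≤ frob (V (t+1)) / ρ t := by
      apply div_le_div_of_nonneg_left (frob_nonneg _) hr (hmono (Nat.le_succ t))
    have hd' := hD t
    have hv0 : 0 ≤ frob (V t) / ρ t := div_nonneg (frob_nonneg _) hr.le
    have e : (1 + 3*h/ρ t) * (frob (D t) + frob (V t)/ρ t) + 3*g/ρ t
        = (((1 + 2 * h / ρ t) * frob (D t) + 2 * g / ρ t + 2 * h * frob (V t) / (ρ t) ^ 2)
          + (g + h * frob (D t) + h * frob (V t) / ρ t) / ρ t) + frob (V t) / ρ t := by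
      field_simp
      ring
    calc frob (D (t+1)) + frob (V (t+1)) / ρ (t+1)
        ≤ frob (D (t+1)) + frob (V (t+1)) / ρ t := by linarith
      _ ≤ ((1 + 2 * h / ρ t) * frob (D t) + 2 * g / ρ t + 2 * h * frob (V t) / (ρ t) ^ 2)
          + (g + h * frob (D t) + h * frob (V t) / ρ t) / ρ t := by
          gcongr
      _ ≤ _ := by rw [e]; linarith
  have hprod : ∀ k, (1:ℝ) ≤ ∏ s ∈ Finset.range k, (1 + 3 * h / ρ s) := by
    intro k
    induction k with
    | zero => simp
    | succ k ih =>
      rw [Finset.prod_range_succ]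
      have hc0 : (0:ℝ) ≤ 3*h/ρ k := div_nonneg (by linarith) (hρ k).le
      nlinarith
  intro t
  induction t with
  | zero => simp
  | succ t ih =>
    have hr := hρ t
    have hc0 : (0:ℝ) ≤ 3*h/ρ t := by positivity
    have hfac : (1:ℝ) ≤ 1 + 3*h/ρ t := by linarith
    have hterm : 0 ≤ 3*g/ρ t := by positivity
    rw [Finset.prod_range_succ, Finset.sum_range_succ]
    have t1 : 3*g/ρ t ≤ (1 + 3*h/ρ t) * (3*g/ρ t) := le_mul_of_one_le_left hterm hfac
    have t2 : (1 + 3*h/ρ t) * (3*g/ρ t)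
        ≤ (∏ s ∈ Finset.range t, (1 + 3 * h / ρ s)) * ((1 + 3*h/ρ t) * (3*g/ρ t)) :=
      le_mul_of_one_le_left (by positivity) (hprod t)
    have step := key t
    have ih' := mul_le_mul_of_nonneg_left ih (by linarith : (0:ℝ) ≤ 1 + 3*h/ρ t)
    have heq : (∏ s ∈ Finset.range t, (1 + 3 * h / ρ s)) * (1 + 3*h/ρ t) *
          (frob (D 0) + frob (V 0) / ρ 0 + (∑ s ∈ Finset.range t, 3 * g / ρ s) + 3*g/ρ t)
        = (1 + 3*h/ρ t) * ((∏ s ∈ Finset.range t, (1 + 3 * h / ρ s)) *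
            (frob (D 0) + frob (V 0) / ρ 0 + ∑ s ∈ Finset.range t, 3 * g / ρ s))
          + (∏ s ∈ Finset.range t, (1 + 3 * h / ρ s)) * ((1 + 3*h/ρ t) * (3*g/ρ t)) := by
      ring
    linarith
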